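/- arXiv:1807.03221 — 2 statements merged into one kernel-verified Lean document; each statement's English description precedes it below -/
import Mathlib

section
/- Let HS1(t) = (1+t^2)*(1 + 17t^2 + 48t^4 + 17t^6 + t^8)/(1-t^2)^10 and HS4(t) = (1 + 10t^2 + 55t^4 + 150t^6 + 288t^8 + 336t^10 + 288t^12 + 150t^14 + 55t^16 + 10t^18 + t^20)/((1-t^2)^10 (1+t^2)^5). Then lim_{t->1} HS1(t)/HS4(t) = 4. -/
open Filter

theorem volume_ratio_D4_P22 :
    Tendsto (fun t : ℝ =>
        ((1 + t^2) * (1 + 17*t^2 + 48*t^4 + 17*t^6 + t^8) / (1 - t^2)^10) /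
        ((1 + 10*t^2 + 55*t^4 + 150*t^6 + 288*t^8 + 336*t^10 + 288*t^12
            + 150*t^14 + 55*t^16 + 10*t^18 + t^20) /
          ((1 - t^2)^10 * (1 + t^2)^5)))
      (nhdsWithin 1 {(1 : ℝ)}ᶜ) (nhds 4) := by
  set g : ℝ → ℝ := fun t =>
    ((1 + t^2)^6 * (1 + 17*t^2 + 48*t^4 + 17*t^6 + t^8)) /
      (1 + 10*t^2 + 55*t^4 + 150*t^6 + 288*t^8 + 336*t^10 + 288*t^12
        + 150*t^14 + 55*t^16 + 10*t^18 + t^20) with hg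
  have hdpos : ∀ t : ℝ, (0:ℝ) < 1 + 10*t^2 + 55*t^4 + 150*t^6 + 288*t^8 + 336*t^10
      + 288*t^12 + 150*t^14 + 55*t^16 + 10*t^18 + t^20 := by
    intro t
    positivity
  have hcont : Tendsto g (nhds 1) (nhds 4) := by
    have : ContinuousAt g 1 := by
      apply ContinuousAt.div
      · fun_prop
      · fun_prop
      · exact ne_of_gt (hdpos 1)
    have hval : g 1 = 4 := by
      rw [hg]; norm_num
    simpa [hval] using this.tendsto
  apply Tendsto.congr' _ (hcont.mono_left nhdsWithin_le_nhds)
  have hmem : Set.Ioo (0:ℝ) (2:ℝ) ∩ {(1:ℝ)}ᶜ ∈ nhdsWithin (1:ℝ) {(1:ℝ)}ᶜ :=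
    inter_mem (nhdsWithin_le_nhds (Ioo_mem_nhds (by norm_num) (by norm_num)))
      self_mem_nhdsWithin
  filter_upwards [hmem] with t ht
  obtain ⟨⟨ht0, ht2⟩, htne⟩ := ht
  have h1 : t ≠ 1 := htne
  have hne1 : (1 - t^2) ≠ 0 := by
    intro h
    have ht2' : t^2 = 1 := by linarith
    have : (t-1)*(t+1) = 0 := by nlinarith
    rcases mul_eq_zero.mp this with h | h
    · exact h1 (by linarith)
    · nlinarith
  have hne2 : (1 + t^2) ≠ 0 := by positivity
  have hned : (1 + 10*t^2 + 55*t^4 + 150*t^6 + 288*t^8 + 336*t^10 + 288*t^12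
      + 150*t^14 + 55*t^16 + 10*t^18 + t^20) ≠ 0 := ne_of_gt (hdpos t)
  rw [hg]
  field_simp
end

section
/- Let HS1(t) = (1+t^2)*(1 + 17t^2 + 48t^4 + 17t^6 + t^8)/(1-t^2)^10 and HS5(t) = (1 + 3t^2 + 13t^4 + 25t^6 + 46t^8 + 48t^10 + 46t^12 + 25t^14 + 13t^16 + 3t^18 + t^20)/((1-t^2)^5 (1-t^4)^5). Then lim_{t->1} HS1(t)/HS5(t) = 24. -/
open Filter

theorem volume_ratio_D4_P4 :
    Tendsto (fun t : ℝ =>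
        ((1 + t^2) * (1 + 17*t^2 + 48*t^4 + 17*t^6 + t^8) / (1 - t^2)^10) /
        ((1 + 3*t^2 + 13*t^4 + 25*t^6 + 46*t^8 + 48*t^10 + 46*t^12
            + 25*t^14 + 13*t^16 + 3*t^18 + t^20) /
          ((1 - t^2)^5 * (1 - t^4)^5)))
      (nhdsWithin 1 {(1 : ℝ)}ᶜ) (nhds 24) := by
  set g : ℝ → ℝ := fun t =>
    ((1 + t^2)^6 * (1 + 17*t^2 + 48*t^4 + 17*t^6 + t^8)) /
      (1 + 3*t^2 + 13*t^4 + 25*t^6 + 46*t^8 + 48*t^10 + 46*t^12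
          + 25*t^14 + 13*t^16 + 3*t^18 + t^20) with hg
  have hQ : ∀ t : ℝ, (1 + 3*t^2 + 13*t^4 + 25*t^6 + 46*t^8 + 48*t^10 + 46*t^12
          + 25*t^14 + 13*t^16 + 3*t^18 + t^20) ≠ 0 := by
    intro t
    have h2 : (0:ℝ) ≤ t^2 := sq_nonneg t
    nlinarith [pow_nonneg h2 1, pow_nonneg h2 2, pow_nonneg h2 3, pow_nonneg h2 4,
      pow_nonneg h2 5, pow_nonneg h2 6, pow_nonneg h2 7, pow_nonneg h2 8,
      pow_nonneg h2 9, pow_nonneg h2 10]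
  have hgt : Tendsto g (nhdsWithin 1 {(1:ℝ)}ᶜ) (nhds 24) := by
    have hc : ContinuousAt g 1 := by
      apply ContinuousAt.div
      · fun_prop
      · fun_prop
      · exact hQ 1
    have h24 : g 1 = 24 := by norm_num [hg]
    rw [← h24]
    exact hc.continuousWithinAt.tendsto
  apply hgt.congr'
  have hmem : Set.Ioo (0:ℝ) 2 ∈ nhdsWithin (1:ℝ) {(1:ℝ)}ᶜ :=
    nhdsWithin_le_nhds (Ioo_mem_nhds (by norm_num) (by norm_num))
  have hne : {(1:ℝ)}ᶜ ∈ nhdsWithin (1:ℝ) {(1:ℝ)}ᶜ := self_mem_nhdsWithin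
  filter_upwards [hmem, hne] with t ht ht1
  have ht1' : t ≠ 1 := ht1
  have hm1 : t ≠ -1 := by intro h; rw [h] at ht; exact absurd ht.1 (by norm_num)
  have h1 : (1 : ℝ) - t^2 ≠ 0 := by
    intro h
    have : (1 - t) * (1 + t) = 0 := by ring_nf; linarith
    rcases mul_eq_zero.mp this with h' | h'
    · exact ht1' (by linarith)
    · exact hm1 (by linarith)
  have h2 : (1 : ℝ) + t^2 ≠ 0 := by positivity
  have h4 : (1 : ℝ) - t^4 ≠ 0 := by
    intro h
    apply h1
    have : (1 - t^2) * (1 + t^2) = 0 := by ring_nf; linarith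
    exact (mul_eq_zero.mp this).resolve_right h2
  rw [hg]
  field_simp
  ring
end
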